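/- Suppose X is a set, δ : X → (0,∞), C > 0, N a positive integer, and assume: for every p ∈ X there exists g_p : X → ℂ in a linear function space B (with norm ‖f‖ = sup δ^N |f| finite on B, B complete, norm convergence implying pointwise convergence) with g_p(p) = 1 and ‖g_p‖ ≤ C·δ(p). Suppose further there is a sequence of points q_k ∈ X with δ(q_k) ≤ δ(q_{k−1})^N / (k·2^k·C) and f₁ ≡ 1 ∈ B. Then there exists f ∈ B and a subsequence of points along which |f| tends to infinity; precisely, one can construct f ∈ B with |f(q_j)| ≥ j − 1 for all j. -/

import Mathlib

open Filter

noncomputable def csgn (z : ℂ) : ℂ := if z = 0 then 1 else z / ‖z‖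

lemma norm_coe_real (r : ℝ) (hr : 0 ≤ r) : ‖(r : ℂ)‖ = r := by
  rw [Complex.norm_real, Real.norm_of_nonneg hr]

lemma csgn_norm (z : ℂ) : ‖csgn z‖ = 1 := by
  unfold csgn
  split_ifs with h
  · simp
  · rw [norm_div, norm_coe_real _ (norm_nonneg z), div_self (norm_ne_zero_iff.mpr h)]

lemma csgn_add (z : ℂ) (c : ℝ) (hc : 0 ≤ c) : ‖z + (c : ℂ) * csgn z‖ = ‖z‖ + c := by
  unfold csgn
  split_ifs with h
  · simp [h, norm_coe_real c hc, hc]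
  · have hz : ‖z‖ ≠ 0 := norm_ne_zero_iff.mpr h
    have hr : ((‖z‖ : ℝ) : ℂ) ≠ 0 := Complex.ofReal_ne_zero.mpr hz
    have e : z + (c : ℂ) * (z / (‖z‖ : ℂ)) = (((‖z‖ : ℝ) : ℂ) + (c : ℂ)) / ((‖z‖ : ℝ) : ℂ) * z := by
      have hr' : ((‖z‖ : ℝ) : ℂ) ≠ 0 := by
        exact hr
      field_simp [hr']
    rw [e, norm_mul, norm_div, ← Complex.ofReal_add,
      norm_coe_real _ (by positivity), norm_coe_real _ (norm_nonneg z),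
      div_mul_cancel₀ _ hz]



/-- Abstract version of Lemma 2.1: let `B` be a Banach space of functions on `X`
with norm `‖f‖ = sup_p δ(p)^N |f(p)|`, suppose that for every `p ∈ X` there is
`g_p ∈ B` with `g_p(p) = 1` and `‖g_p‖ ≤ C·δ(p)`, that `B` contains the constant
function `1`, and that there are points `q_k` with
`δ(q_k) ≤ δ(q_{k−1})^N / (k·2^k·C)`. Then there is `f ∈ B` with
`|f(q_j)| ≥ j − 1` for all `j`; in particular `|f|` tends to infinity along a
subsequence of the `q_j`. -/
theorem stmt_7 (X : Type*) (B : Type*) [NormedAddCommGroup B] [NormedSpace ℂ B]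
    [CompleteSpace B] (ev : B →ₗ[ℂ] (X → ℂ))
    (δ : X → ℝ) (hδ : ∀ p, 0 < δ p) (hδ1 : ∀ p, δ p ≤ 1)
    (C : ℝ) (hC : 0 < C) (N : ℕ) (hN : 1 ≤ N)
    (hnorm : ∀ g : B, IsLUB (Set.range fun p => δ p ^ N * ‖ev g p‖) ‖g‖)
    (hev : ∀ (g : ℕ → B) (h : B), Filter.Tendsto g Filter.atTop (nhds h) →
      ∀ x, Filter.Tendsto (fun j => ev (g j) x) Filter.atTop (nhds (ev h x)))
    (hpeak : ∀ p : X, ∃ g : B, ev g p = 1 ∧ ‖g‖ ≤ C * δ p)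
    (hone : ∃ one : B, ∀ p, ev one p = 1)
    (q : ℕ → X)
    (hq : ∀ k : ℕ, 2 ≤ k → δ (q k) ≤ δ (q (k - 1)) ^ N / (k * 2 ^ k * C)) :
    ∃ f : B, ∀ j : ℕ, 1 ≤ j → (j : ℝ) - 1 ≤ ‖ev f (q j)‖ := by
  obtain ⟨one, hone1⟩ := hone
  choose g hg1 hg2 using hpeak
  -- evaluation bound
  have hevb : ∀ (h : B) (p : X), δ p ^ N * ‖ev h p‖ ≤ ‖h‖ := fun h p =>
    (hnorm h).1 ⟨p, rfl⟩
  have hevb' : ∀ (h : B) (p : X), ‖ev h p‖ ≤ ‖h‖ / δ p ^ N := by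
    intro h p
    rw [le_div_iff₀ (pow_pos (hδ p) N)]
    calc ‖ev h p‖ * δ p ^ N = δ p ^ N * ‖ev h p‖ := by ring
    _ ≤ ‖h‖ := hevb h p
  -- lower bound on C
  have hCd : ∀ p, δ p ^ N ≤ C * δ p := by
    intro p
    have h1 := hevb (g p) p
    rw [hg1 p] at h1
    simp only [norm_one, mul_one] at h1
    exact h1.trans (hg2 p)
  -- monotonicity of δ ∘ q
  have hmono1 : ∀ k, 2 ≤ k → δ (q k) ≤ δ (q (k - 1)) := by
    intro k hk
    have hk1 : (1:ℝ) ≤ (k : ℝ) := by exact_mod_cast le_trans (by norm_num) hk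
    have hk0 : (0:ℝ) < (k : ℝ) * 2 ^ k := by positivity
    have h1 := hq k hk
    have h2 : δ (q (k-1)) ^ N / ((k:ℝ) * 2 ^ k * C) ≤
        (C * δ (q (k-1))) / ((k:ℝ) * 2 ^ k * C) := by
      gcongr
      exact hCd _
    have h3 : (C * δ (q (k-1))) / ((k:ℝ) * 2 ^ k * C) = δ (q (k-1)) / ((k:ℝ) * 2 ^ k) := by
      field_simp
    have h4 : δ (q (k-1)) / ((k:ℝ) * 2 ^ k) ≤ δ (q (k-1)) := by
      apply div_le_self (le_of_lt (hδ _))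
      calc (1:ℝ) ≤ (k:ℝ) := hk1
      _ ≤ (k:ℝ) * 2 ^ k := le_mul_of_one_le_right (by positivity) (one_le_pow₀ (by norm_num : (1:ℝ) ≤ 2))
    calc δ (q k) ≤ _ := h1
    _ ≤ _ := h2
    _ = _ := h3
    _ ≤ _ := h4
  have hmono : ∀ j m, 1 ≤ j → j ≤ m → δ (q m) ≤ δ (q j) := by
    intro j m hj hm
    induction m, hm using Nat.le_induction with
    | base => exact le_refl _
    | succ m hm ih =>
      have := hmono1 (m+1) (by omega)
      simp only [Nat.add_sub_cancel] at this
      exact this.trans ih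
  -- construct the sequence
  obtain ⟨F, hF0, hFs⟩ : ∃ F : ℕ → B, F 0 = one ∧ ∀ k, F (k+1) = F k +
      ((((k+1 : ℕ) : ℝ) : ℂ) * csgn (ev (F k) (q (k+1)))) • g (q (k+1)) :=
    ⟨fun n => Nat.rec one (fun k Fk => Fk +
      ((((k+1 : ℕ) : ℝ) : ℂ) * csgn (ev Fk (q (k+1)))) • g (q (k+1))) n, rfl, fun _ => rfl⟩
  -- value at q k
  have hFval : ∀ j : ℕ, 1 ≤ j → (j:ℝ) ≤ ‖ev (F j) (q j)‖ := by
    intro j hj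
    obtain ⟨k, rfl⟩ : ∃ k, j = k + 1 := ⟨j - 1, by omega⟩
    rw [hFs k, map_add, map_smul]
    have : (ev (F k) + (((((k+1 : ℕ) : ℝ)) : ℂ) * csgn (ev (F k) (q (k+1)))) • ev (g (q (k+1))))
        (q (k+1)) = ev (F k) (q (k+1)) +
        ((((k+1 : ℕ) : ℝ) : ℂ) * csgn (ev (F k) (q (k+1)))) * ev (g (q (k+1))) (q (k+1)) := rfl
    rw [this, hg1, mul_one, csgn_add _ _ (Nat.cast_nonneg _)]
    have hnn := norm_nonneg (ev (F k) (q (k+1)))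
    push_cast
    linarith
  -- norm of increments
  have hFd : ∀ k, 1 ≤ k → ‖F (k+1) - F k‖ ≤ δ (q k) ^ N / 2 ^ (k+1) := by
    intro k hk
    rw [hFs k, add_sub_cancel_left, norm_smul, norm_mul, csgn_norm, mul_one,
      norm_coe_real _ (by positivity)]
    have h1 := hq (k+1) (by omega)
    simp only [Nat.add_sub_cancel] at h1
    have h2 : ‖g (q (k+1))‖ ≤ C * (δ (q k) ^ N / (((k+1:ℕ):ℝ) * 2 ^ (k+1) * C)) := by
      refine (hg2 _).trans ?_
      gcongr
    calc ((k+1:ℕ):ℝ) * ‖g (q (k+1))‖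
        ≤ ((k+1:ℕ):ℝ) * (C * (δ (q k) ^ N / (((k+1:ℕ):ℝ) * 2 ^ (k+1) * C))) := by
          gcongr
    _ = δ (q k) ^ N / 2 ^ (k+1) := by
          have hk1 : ((k+1:ℕ):ℝ) ≠ 0 := by positivity
          field_simp
  have hFd2 : ∀ k, 1 ≤ k → ‖F (k+1) - F k‖ ≤ (1/2:ℝ) ^ (k+1) := by
    intro k hk
    refine (hFd k hk).trans ?_
    rw [div_pow, one_pow, div_le_div_iff₀ (by positivity) (by positivity), one_mul]
    calc δ (q k) ^ N * 2 ^ (k+1) ≤ 1 * 2 ^ (k+1) := by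
          gcongr
          exact pow_le_one₀ (hδ _).le (hδ1 _)
    _ = 2 ^ (k+1) := one_mul _
  -- Cauchy
  have hcauchy : CauchySeq F := by
    apply cauchySeq_of_dist_le_of_summable
      (fun n => if n = 0 then dist (F 0) (F 1) else (1/2:ℝ) ^ (n+1))
    · intro n
      rcases Nat.eq_zero_or_pos n with h | h
      · subst h; simp
      · simp only [Nat.pos_iff_ne_zero.mp h, if_false]
        rw [dist_eq_norm, norm_sub_rev]
        exact hFd2 n h
    · rw [← summable_nat_add_iff 1]
      have h : Summable (fun n : ℕ => (1/2:ℝ)^2 * (1/2:ℝ)^n) :=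
        Summable.mul_left _ (summable_geometric_of_lt_one (by norm_num) (by norm_num))
      refine h.congr fun n => ?_
      rw [if_neg (Nat.succ_ne_zero n)]
      ring
  obtain ⟨f, hf⟩ := cauchySeq_tendsto_of_complete hcauchy
  refine ⟨f, ?_⟩
  intro j hj
  have hptw := hev F f hf (q j)
  have key : ∀ m, j ≤ m → ‖ev (F m) (q j) - ev (F j) (q j)‖ ≤ (1/2:ℝ)^j - (1/2:ℝ)^m := by
    intro m hm
    induction m, hm using Nat.le_induction with
    | base => simp
    | succ m hm ih =>
      have hm1 : 1 ≤ m := le_trans hj hm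
      have step : ‖ev (F (m+1)) (q j) - ev (F m) (q j)‖ ≤ (1/2:ℝ)^(m+1) := by
        have h1 : ev (F (m+1)) (q j) - ev (F m) (q j) = ev (F (m+1) - F m) (q j) := by
          rw [map_sub]; rfl
        rw [h1]
        refine (hevb' _ _).trans ?_
        have h3 : ‖F (m+1) - F m‖ ≤ δ (q m) ^ N / 2 ^ (m+1) := hFd m hm1
        have h4 : δ (q m) ≤ δ (q j) := hmono j m hj hm
        have hdj : (0:ℝ) < δ (q j) ^ N := pow_pos (hδ _) N
        have hba : δ (q m) ^ N ≤ δ (q j) ^ N := pow_le_pow_left₀ (hδ _).le h4 N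
        rw [div_le_iff₀ hdj]
        refine h3.trans ?_
        have he : ((1:ℝ)/2)^(m+1) * δ (q j) ^ N = δ (q j) ^ N / 2 ^ (m+1) := by
          rw [div_pow, one_pow]
          ring
        rw [he]
        exact (div_le_div_iff_of_pos_right (by positivity)).mpr hba
      calc ‖ev (F (m+1)) (q j) - ev (F j) (q j)‖
          ≤ ‖ev (F (m+1)) (q j) - ev (F m) (q j)‖ + ‖ev (F m) (q j) - ev (F j) (q j)‖ := by
            have := norm_add_le (ev (F (m+1)) (q j) - ev (F m) (q j))
              (ev (F m) (q j) - ev (F j) (q j))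
            rwa [sub_add_sub_cancel] at this
      _ ≤ (1/2:ℝ)^(m+1) + ((1/2:ℝ)^j - (1/2:ℝ)^m) := add_le_add step ih
      _ = (1/2:ℝ)^j - (1/2:ℝ)^(m+1) := by ring
  have hlim : ‖ev f (q j) - ev (F j) (q j)‖ ≤ (1/2:ℝ)^j := by
    have ht : Tendsto (fun m => ‖ev (F m) (q j) - ev (F j) (q j)‖) atTop
        (nhds ‖ev f (q j) - ev (F j) (q j)‖) := (hptw.sub tendsto_const_nhds).norm
    refine le_of_tendsto ht ?_
    filter_upwards [eventually_ge_atTop j] with m hm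
    refine (key m hm).trans ?_
    have : (0:ℝ) ≤ (1/2:ℝ)^m := by positivity
    linarith
  have h5 : (j:ℝ) ≤ ‖ev (F j) (q j)‖ := hFval j hj
  have h6 : ‖ev (F j) (q j)‖ - ‖ev f (q j)‖ ≤ ‖ev f (q j) - ev (F j) (q j)‖ := by
    rw [norm_sub_rev]
    exact norm_sub_norm_le _ _
  have h7 : (1/2:ℝ)^j ≤ 1 := pow_le_one₀ (by norm_num) (by norm_num)
  linarith
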